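/- Let x₃ = 2/3 and define x₁ = x₃(1+√177)/88, x₂ = x₃(1+√177)/352, x₄ = (−271+29√177)/(315x₃), x₅ = 11(−1+√177)/(1260x₃), x₆ = 11(−9+√177)/(5040x₃), x₇ = (89−√177)/(5040x₃²), y₀ = 1, y₁ = 1, y₂ = (857−58√177)/630. Then for every square real matrix A, setting A₂ = A², A₄ = A₂(x₁A + x₂A₂), A₈ = (x₃A₂ + A₄)(x₄I + x₅A + x₆A₂ + x₇A₄), one has y₀I + y₁A + y₂A₂ + A₈ = ∑_{i=0}^{8} A^i/i!. -/

import Mathlib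

theorem taylor8_three_products (n : ℕ) (A : Matrix (Fin n) (Fin n) ℝ) :
    let x3 : ℝ := 2/3
    let x1 : ℝ := x3 * (1 + Real.sqrt 177) / 88
    let x2 : ℝ := x3 * (1 + Real.sqrt 177) / 352
    let x4 : ℝ := (-271 + 29 * Real.sqrt 177) / (315 * x3)
    let x5 : ℝ := 11 * (-1 + Real.sqrt 177) / (1260 * x3)
    let x6 : ℝ := 11 * (-9 + Real.sqrt 177) / (5040 * x3)
    let x7 : ℝ := (89 - Real.sqrt 177) / (5040 * x3 ^ 2)
    let y0 : ℝ := 1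
    let y1 : ℝ := 1
    let y2 : ℝ := (857 - 58 * Real.sqrt 177) / 630
    let A2 := A ^ 2
    let A4 := A2 * (x1 • A + x2 • A2)
    let A8 := (x3 • A2 + A4) *
      (x4 • (1 : Matrix (Fin n) (Fin n) ℝ) + x5 • A + x6 • A2 + x7 • A4)
    y0 • (1 : Matrix (Fin n) (Fin n) ℝ) + y1 • A + y2 • A2 + A8
      = ∑ i ∈ Finset.range 9, ((Nat.factorial i : ℝ))⁻¹ • A ^ i := by
  intro x3 x1 x2 x4 x5 x6 x7 y0 y1 y2 A2 A4 A8
  have hs : Real.sqrt 177 ^ 2 = 177 := Real.sq_sqrt (by norm_num)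
  have h3 : Real.sqrt 177 ^ 3 = 177 * Real.sqrt 177 := by
    rw [pow_succ, hs, mul_comm]
  have h4 : Real.sqrt 177 ^ 4 = 177 ^ 2 := by
    rw [show (4:ℕ) = 2*2 from rfl, pow_mul, hs]
  simp only [A8, A4, A2, Finset.sum_range_succ, Finset.sum_range_zero, Nat.factorial,
    mul_add, add_mul, smul_mul_assoc, mul_smul_comm, smul_smul, mul_one, one_mul,
    ← pow_succ, ← pow_add, zero_add, pow_zero, pow_one, Nat.cast_one, inv_one]
  push_cast
  match_scalars <;>
    (simp only [y0, y1, y2, x1, x2, x4, x5, x6, x7, x3]; try ring_nf;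
     try simp only [hs, h3, h4]; try ring_nf; try norm_num)
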